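/- For each integer k ≥ 1 define v_k(t) = (k^{k-1}/k!) · t^{k-1} · e^{-kt} for t ≥ 0. Then v_k(0) = 1 if k = 1 and v_k(0) = 0 if k ≥ 2, and for every t > 0 and every k ≥ 1 the derivative satisfies v_k'(t) = (k/2) · ∑_{l=1}^{k-1} v_l(t) v_{k-l}(t) − k · v_k(t). -/

import Mathlib

open Finset


lemma smolu_fwdDiff_pow_zero : ∀ d n : ℕ, d < n → (fwdDiff (1:ℝ))^[n] (fun x : ℝ => x ^ d) = 0 := by
  intro d
  induction d using Nat.strong_induction_on with
  | _ d ih =>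
    rintro (_|m) hdn
    · omega
    rw [Function.iterate_succ_apply]
    have hΔ : fwdDiff (1:ℝ) (fun x : ℝ => x ^ d)
        = ∑ e ∈ range d, (d.choose e : ℝ) • (fun x : ℝ => x ^ e) := by
      funext x
      simp only [fwdDiff, Finset.sum_apply, Pi.smul_apply, smul_eq_mul]
      rw [add_pow, Finset.sum_range_succ]
      simp [mul_comm]
    rw [hΔ, fwdDiff_iter_finset_sum]
    refine Finset.sum_eq_zero fun e he => ?_
    have he' := mem_range.mp he
    rw [fwdDiff_iter_const_smul, ih e he' m (by omega), smul_zero]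

lemma smolu_findiff (d n : ℕ) (hdn : d < n) (c : ℝ) :
    ∑ j ∈ range (n+1), (-1:ℝ)^j * (n.choose j) * ((j:ℝ) + c)^d = 0 := by
  have H := fwdDiff_iter_eq_sum_shift (1:ℝ) (fun x : ℝ => x ^ d) n c
  rw [smolu_fwdDiff_pow_zero d n hdn] at H
  simp only [Pi.zero_apply, zsmul_eq_mul, smul_eq_mul, mul_one] at H
  have H2 : (0:ℝ) = ∑ k ∈ range (n+1), (-1:ℝ)^(n-k) * (n.choose k) * ((k:ℝ) + c)^d := by
    rw [H]
    refine Finset.sum_congr rfl fun k hk => ?_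
    push_cast
    ring
  have key : ∑ j ∈ range (n+1), (-1:ℝ)^j * (n.choose j) * ((j:ℝ) + c)^d
      = (-1:ℝ)^n * ∑ k ∈ range (n+1), (-1:ℝ)^(n-k) * (n.choose k) * ((k:ℝ) + c)^d := by
    rw [Finset.mul_sum]
    refine Finset.sum_congr rfl fun k hk => ?_
    have hk' : k ≤ n := Nat.lt_succ_iff.mp (mem_range.mp hk)
    have h1 : (-1:ℝ)^n * (-1)^(n-k) = (-1)^k := by
      rw [← pow_add]
      have h2 : n + (n-k) = 2*(n-k) + k := by omega
      rw [h2, pow_add, pow_mul]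
      simp
    rw [← h1]; ring
  rw [key, ← H2, mul_zero]


lemma smolu_abelA : ∀ n : ℕ, ∀ y : ℝ,
    ∑ j ∈ range (n+1), (n.choose j : ℝ) * ((j:ℝ)+1)^(j-1) * (y + n - j)^(n-j)
      = (y + n + 1)^n := by
  intro n
  induction n with
  | zero => intro y; simp
  | succ n ih =>
    intro y
    set F : ℝ → ℝ := fun z =>
      (∑ j ∈ range (n+2), ((n+1).choose j : ℝ) * ((j:ℝ)+1)^(j-1) * (z + ((n+1:ℕ):ℝ) - j)^(n+1-j))
        - (z + ((n+1:ℕ):ℝ) + 1)^(n+1) with hFdef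
    have hF : ∀ z : ℝ, HasDerivAt F 0 z := by
      intro z
      have hsum : HasDerivAt
          (fun w : ℝ => ∑ j ∈ range (n+2),
            ((n+1).choose j : ℝ) * ((j:ℝ)+1)^(j-1) * (w + ((n+1:ℕ):ℝ) - j)^(n+1-j))
          (∑ j ∈ range (n+2),
            ((n+1).choose j : ℝ) * ((j:ℝ)+1)^(j-1) *
              (((n+1-j : ℕ):ℝ) * (z + ((n+1:ℕ):ℝ) - j)^(n+1-j-1))) z := by
        refine HasDerivAt.fun_sum fun j hj => ?_
        have h1 : HasDerivAt (fun w : ℝ => w + (((n+1:ℕ):ℝ) - j)) 1 z := by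
          simpa using (hasDerivAt_id z).add_const (((n+1:ℕ):ℝ) - (j:ℝ))
        have h1' : HasDerivAt (fun w : ℝ => w + ((n+1:ℕ):ℝ) - j) 1 z := by
          simpa only [add_sub_assoc] using h1
        have h0 := h1'.pow (n+1-j)
        simp only [mul_one] at h0
        exact h0.const_mul _
      have hpow : HasDerivAt (fun w : ℝ => (w + ((n+1:ℕ):ℝ) + 1)^(n+1))
          (((n+1:ℕ):ℝ) * (z + ((n+1:ℕ):ℝ) + 1)^n) z := by
        have h1 : HasDerivAt (fun w : ℝ => w + ((n+1:ℕ):ℝ) + 1) 1 z := by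
          simpa using ((hasDerivAt_id z).add_const (((n+1:ℕ):ℝ))).add_const (1:ℝ)
        have h0 := h1.pow (n+1)
        simp only [mul_one, Nat.add_sub_cancel] at h0
        exact h0
      have key : ∑ j ∈ range (n+2),
            ((n+1).choose j : ℝ) * ((j:ℝ)+1)^(j-1) *
              (((n+1-j : ℕ):ℝ) * (z + ((n+1:ℕ):ℝ) - j)^(n+1-j-1))
          = ((n+1:ℕ):ℝ) * (z + ((n+1:ℕ):ℝ) + 1)^n := by
        rw [Finset.sum_range_succ]
        simp only [Nat.sub_self, Nat.cast_zero, zero_mul, mul_zero, add_zero]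
        have step : ∀ j ∈ range (n+1),
            ((n+1).choose j : ℝ) * ((j:ℝ)+1)^(j-1) *
              (((n+1-j : ℕ):ℝ) * (z + ((n+1:ℕ):ℝ) - j)^(n+1-j-1))
            = ((n+1:ℕ):ℝ) * ((n.choose j : ℝ) * ((j:ℝ)+1)^(j-1) * ((z+1) + (n:ℝ) - j)^(n-j)) := by
          intro j hj
          have hj' : j ≤ n := Nat.lt_succ_iff.mp (mem_range.mp hj)
          have h2 : (n+1).choose (j+1) * (j+1) = (n+1).choose j * (n+1-j) :=
            Nat.choose_succ_right_eq (n+1) j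
          have h3 : (n+1) * n.choose j = (n+1).choose (j+1) * (j+1) := Nat.add_one_mul_choose_eq n j
          have hchoose : (n+1).choose j * (n+1-j) = (n+1) * n.choose j := by rw [← h2, h3]
          have hexp : n+1-j-1 = n-j := by omega
          have hbase : z + ((n+1:ℕ):ℝ) - j = (z+1) + (n:ℝ) - j := by push_cast; ring
          rw [hexp, hbase]
          push_cast
          have hc := congrArg (fun x : ℕ => (x : ℝ)) hchoose
          push_cast at hc
          linear_combination (((j:ℝ)+1)^(j-1) * ((z+1) + (n:ℝ) - j)^(n-j)) * hc
        rw [Finset.sum_congr rfl step, ← Finset.mul_sum, ih (z+1)]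
        have hb : (z+1) + (n:ℝ) + 1 = z + ((n+1:ℕ):ℝ) + 1 := by push_cast; ring
        rw [hb]
      have h := hsum.sub hpow
      rw [key, sub_self] at h
      exact h
    have hconst : ∀ a b : ℝ, F a = F b :=
      is_const_of_deriv_eq_zero (fun z => (hF z).differentiableAt) (fun z => (hF z).deriv)
    have hzero : F (-(((n+1:ℕ):ℝ)+1)) = 0 := by
      simp only [hFdef]
      have hrhs : ((-(((n+1:ℕ):ℝ)+1)) + ((n+1:ℕ):ℝ) + 1)^(n+1) = (0:ℝ) := by
        rw [show (-(((n+1:ℕ):ℝ)+1)) + ((n+1:ℕ):ℝ) + 1 = (0:ℝ) by ring]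
        exact zero_pow (by omega)
      rw [hrhs, sub_zero]
      have hterm : ∀ j ∈ range (n+2),
          ((n+1).choose j : ℝ) * ((j:ℝ)+1)^(j-1) *
            ((-(((n+1:ℕ):ℝ)+1)) + ((n+1:ℕ):ℝ) - j)^(n+1-j)
          = (-1:ℝ)^(n+1) * ((-1:ℝ)^j * (((n+1).choose j : ℝ)) * ((j:ℝ)+1)^n) := by
        intro j hj
        have hj' : j ≤ n+1 := Nat.lt_succ_iff.mp (mem_range.mp hj)
        have hbase : (-(((n+1:ℕ):ℝ)+1)) + ((n+1:ℕ):ℝ) - (j:ℝ) = -(((j:ℝ))+1) := by ring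
        rw [hbase, neg_pow]
        have hsgn : (-1:ℝ)^(n+1-j) = (-1:ℝ)^(n+1) * (-1:ℝ)^j := by
          rw [← pow_add, show n+1+j = (n+1-j) + 2*j by omega, pow_add, pow_mul]
          simp
        have hpows : ((j:ℝ)+1)^(j-1) * ((j:ℝ)+1)^(n+1-j) = ((j:ℝ)+1)^n := by
          rcases Nat.eq_zero_or_pos j with h|h
          · subst h; simp
          · rw [← pow_add]; congr 1; omega
        calc ((n+1).choose j : ℝ) * ((j:ℝ)+1)^(j-1) * ((-1:ℝ)^(n+1-j) * ((j:ℝ)+1)^(n+1-j))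
            = (-1:ℝ)^(n+1-j) * (((n+1).choose j : ℝ)) * (((j:ℝ)+1)^(j-1) * ((j:ℝ)+1)^(n+1-j)) := by
              ring
          _ = _ := by rw [hsgn, hpows]; ring
      rw [Finset.sum_congr rfl hterm, ← Finset.mul_sum]
      have hfd := smolu_findiff n (n+1) (by omega) 1
      have heq : ∑ j ∈ range (n+2), (-1:ℝ)^j * (((n+1).choose j : ℝ)) * ((j:ℝ)+1)^n = 0 := hfd
      rw [heq, mul_zero]
    have hy := hconst y (-(((n+1:ℕ):ℝ)+1))
    rw [hzero] at hy
    simp only [hFdef] at hy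
    rw [sub_eq_zero] at hy
    exact hy


lemma smolu_Gm (m : ℕ) (hm : 1 ≤ m) :
    ∑ j ∈ range (m+1), (m.choose j : ℝ) * ((j:ℝ)+1)^(j-1) * (((m-j:ℕ):ℝ)+1)^(m-j-1)
      = 2 * ((m:ℝ)+2)^(m-1) := by
  have split : ∀ j ∈ range (m+1),
      (m.choose j : ℝ) * ((j:ℝ)+1)^(j-1) * (((m-j:ℕ):ℝ)+1)^(m-j-1)
      = (m.choose j : ℝ) * ((j:ℝ)+1)^(j-1) * ((1:ℝ) + (m:ℝ) - j)^(m-j)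
        - (m.choose j : ℝ) * ((j:ℝ)+1)^(j-1) * (((m-j:ℕ):ℝ) * (((m-j:ℕ):ℝ)+1)^(m-j-1)) := by
    intro j hj
    have hj' : j ≤ m := Nat.lt_succ_iff.mp (mem_range.mp hj)
    have hcast : ((m-j:ℕ):ℝ) = (m:ℝ) - j := by
      rw [Nat.cast_sub hj']
    have hbase : (1:ℝ) + (m:ℝ) - j = ((m-j:ℕ):ℝ) + 1 := by rw [hcast]; ring
    rw [hbase]
    have hid : (((m-j:ℕ):ℝ)+1)^(m-j) = (((m-j:ℕ):ℝ)+1)^(m-j-1)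
        + ((m-j:ℕ):ℝ) * (((m-j:ℕ):ℝ)+1)^(m-j-1) := by
      rcases Nat.eq_zero_or_pos (m-j) with h|h
      · rw [h]; simp
      · rw [show m-j = (m-j-1)+1 by omega, pow_succ]
        rw [show m-j-1+1-1 = m-j-1 by omega]
        ring
    rw [hid]
    ring
  rw [Finset.sum_congr rfl split, Finset.sum_sub_distrib]
  have h1 : ∑ j ∈ range (m+1), (m.choose j : ℝ) * ((j:ℝ)+1)^(j-1) * ((1:ℝ) + (m:ℝ) - j)^(m-j)
      = ((m:ℝ)+2)^m := by
    rw [smolu_abelA m 1, show (1:ℝ) + (m:ℝ) + 1 = (m:ℝ)+2 by ring]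
  have h2 : ∑ j ∈ range (m+1),
      (m.choose j : ℝ) * ((j:ℝ)+1)^(j-1) * (((m-j:ℕ):ℝ) * (((m-j:ℕ):ℝ)+1)^(m-j-1))
      = (m:ℝ) * ((m:ℝ)+2)^(m-1) := by
    rw [Finset.sum_range_succ]
    simp only [Nat.sub_self, Nat.cast_zero, zero_mul, mul_zero, add_zero]
    obtain ⟨m', rfl⟩ : ∃ m', m = m' + 1 := ⟨m-1, by omega⟩
    have step : ∀ j ∈ range (m'+1),
        ((m'+1).choose j : ℝ) * ((j:ℝ)+1)^(j-1) * (((m'+1-j:ℕ):ℝ) * (((m'+1-j:ℕ):ℝ)+1)^(m'+1-j-1))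
        = ((m'+1:ℕ):ℝ) * ((m'.choose j : ℝ) * ((j:ℝ)+1)^(j-1) * ((2:ℝ) + (m':ℝ) - j)^(m'-j)) := by
      intro j hj
      have hj' : j ≤ m' := Nat.lt_succ_iff.mp (mem_range.mp hj)
      have h2' : (m'+1).choose (j+1) * (j+1) = (m'+1).choose j * (m'+1-j) :=
        Nat.choose_succ_right_eq (m'+1) j
      have h3 : (m'+1) * m'.choose j = (m'+1).choose (j+1) * (j+1) := Nat.add_one_mul_choose_eq m' j
      have hchoose : (m'+1).choose j * (m'+1-j) = (m'+1) * m'.choose j := by rw [← h2', h3]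
      have hexp : m'+1-j-1 = m'-j := by omega
      have hbase : ((m'+1-j:ℕ):ℝ) + 1 = (2:ℝ) + (m':ℝ) - j := by
        rw [Nat.cast_sub (by omega)]; push_cast; ring
      rw [hexp, hbase]
      have hc := congrArg (fun x : ℕ => (x : ℝ)) hchoose
      push_cast at hc
      push_cast
      linear_combination (((j:ℝ)+1)^(j-1) * ((2:ℝ) + (m':ℝ) - j)^(m'-j)) * hc
    rw [Finset.sum_congr rfl step, ← Finset.mul_sum, smolu_abelA m' 2]
    push_cast
    ring_nf
  rw [h1, h2]
  have hpow : ((m:ℝ)+2)^m = ((m:ℝ)+2) * ((m:ℝ)+2)^(m-1) := by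
    rw [show m = (m-1)+1 by omega, pow_succ]
    rw [show m-1+1-1 = m-1 by omega]
    ring
  rw [hpow]
  ring

lemma smolu_Skey (k : ℕ) (hk : 2 ≤ k) :
    ∑ l ∈ Ico 1 k, (k.choose l : ℝ) * (l:ℝ)^(l-1) * ((k-l : ℕ):ℝ)^(k-l-1)
      = 2*((k:ℝ)-1)*(k:ℝ)^(k-2) := by
  rcases eq_or_lt_of_le hk with h|h
  · rw [← h]
    rw [show Finset.Ico 1 2 = {1} from rfl]
    norm_num
  · obtain ⟨m, rfl⟩ : ∃ m, k = m + 3 := ⟨k-3, by omega⟩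
    rw [Finset.sum_Ico_eq_sum_range]
    rw [show m + 3 - 1 = (m+1) + 1 by omega]
    have step : ∀ j ∈ range (m+2),
        ((m+3).choose (1+j) : ℝ) * ((1+j:ℕ):ℝ)^(1+j-1) * (((m+3-(1+j)):ℕ):ℝ)^(m+3-(1+j)-1)
        = (((m+3:ℕ):ℝ) * ((m+2:ℕ):ℝ)) *
          (((m+1).choose j : ℝ) * ((j:ℝ)+1)^(j-1) * ((((m+1)-j:ℕ):ℝ)+1)^((m+1)-j-1)) := by
      intro j hj
      have hj' : j ≤ m+1 := Nat.lt_succ_iff.mp (mem_range.mp hj)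
      have c1 : (m+3) * (m+2).choose j = (m+3).choose (j+1) * (j+1) :=
        Nat.add_one_mul_choose_eq (m+2) j
      have c2 : (m+2).choose (j+1) * (j+1) = (m+2).choose j * (m+2-j) :=
        Nat.choose_succ_right_eq (m+2) j
      have c3 : (m+2) * (m+1).choose j = (m+2).choose (j+1) * (j+1) :=
        Nat.add_one_mul_choose_eq (m+1) j
      have hch : (m+3).choose (1+j) * ((1+j) * (m+2-j)) = (m+3) * ((m+2) * (m+1).choose j) := by
        rw [show 1+j = j+1 by omega]
        calc (m+3).choose (j+1) * ((j+1) * (m+2-j))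
            = ((m+3).choose (j+1) * (j+1)) * (m+2-j) := by ring
          _ = ((m+3) * (m+2).choose j) * (m+2-j) := by rw [c1]
          _ = (m+3) * ((m+2).choose j * (m+2-j)) := by ring
          _ = (m+3) * ((m+2).choose (j+1) * (j+1)) := by rw [c2]
          _ = (m+3) * ((m+2) * (m+1).choose j) := by rw [c3]
      have p1 : ((1+j:ℕ):ℝ)^(1+j-1) = ((j:ℝ)+1) * ((j:ℝ)+1)^(j-1) := by
        rcases Nat.eq_zero_or_pos j with h0|h0
        · subst h0; norm_num
        · rw [show (1+j)-1 = (j-1)+1 by omega, pow_succ]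
          push_cast
          ring
      have hb : (((m+1)-j:ℕ):ℝ)+1 = ((m+2-j:ℕ):ℝ) := by
        rw [Nat.cast_sub (by omega), Nat.cast_sub (by omega)]
        push_cast; ring
      have p2 : (((m+3-(1+j)):ℕ):ℝ)^(m+3-(1+j)-1)
          = ((m+2-j:ℕ):ℝ) * ((((m+1)-j:ℕ):ℝ)+1)^((m+1)-j-1) := by
        rw [hb, show m+3-(1+j) = m+2-j by omega]
        rcases Nat.eq_or_lt_of_le hj' with h0|h0
        · rw [show m+2-j = 1 by omega, show (m+1)-j-1 = 0 by omega]
          norm_num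
        · rw [show m+2-j-1 = ((m+1)-j-1)+1 by omega, pow_succ]
          ring
      rw [p1, p2]
      have hc := congrArg (fun x : ℕ => (x : ℝ)) hch
      push_cast [Nat.cast_sub (show j ≤ m+2 by omega)] at hc
      push_cast [Nat.cast_sub (show j ≤ m+2 by omega)]
      linear_combination (((j:ℝ)+1)^(j-1) * ((((m+1)-j:ℕ):ℝ)+1)^((m+1)-j-1)) * hc
    rw [Finset.sum_congr rfl step, ← Finset.mul_sum, smolu_Gm (m+1) (by omega)]
    rw [show (m+1)-1 = m by omega, show m+3-2 = m+1 by omega, pow_succ]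
    push_cast
    rw [show (m:ℝ)+1+2 = (m:ℝ)+3 by ring]
    ring


theorem stmt0 (v : ℕ → ℝ → ℝ)
    (hv : ∀ k : ℕ, 1 ≤ k → ∀ t : ℝ, 0 ≤ t →
      v k t = (k : ℝ) ^ (k - 1) / (Nat.factorial k : ℝ) * t ^ (k - 1) * Real.exp (-(k : ℝ) * t)) :
    (v 1 0 = 1 ∧ ∀ k : ℕ, 2 ≤ k → v k 0 = 0) ∧
    (∀ t : ℝ, 0 < t → ∀ k : ℕ, 1 ≤ k →
      HasDerivAt (v k)
        ((k : ℝ) / 2 * ∑ l ∈ Finset.Ico 1 k, v l t * v (k - l) t - (k : ℝ) * v k t) t) := by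
  constructor
  · constructor
    · rw [hv 1 le_rfl 0 le_rfl]; norm_num
    · intro k hk
      rw [hv k (by omega) 0 le_rfl, zero_pow (show k-1 ≠ 0 by omega)]
      ring
  · intro t ht k hk
    have hveq : (fun s => (k : ℝ) ^ (k - 1) / (Nat.factorial k : ℝ) * s ^ (k - 1)
        * Real.exp (-(k : ℝ) * s)) =ᶠ[nhds t] v k := by
      filter_upwards [isOpen_Ioi.mem_nhds (show t ∈ Set.Ioi (0:ℝ) from ht)] with s hs
      exact (hv k hk s (le_of_lt hs)).symm
    set c : ℝ := (k : ℝ) ^ (k - 1) / (Nat.factorial k : ℝ) with hc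
    have hD : HasDerivAt (fun s : ℝ => c * s^(k-1) * Real.exp (-(k:ℝ)*s))
        (c * (((k-1:ℕ):ℝ) * t^(k-1-1)) * Real.exp (-(k:ℝ)*t)
          + (c * t^(k-1)) * (Real.exp (-(k:ℝ)*t) * (-(k:ℝ)))) t := by
      have h1 : HasDerivAt (fun s : ℝ => c * s^(k-1)) (c * (((k-1:ℕ):ℝ) * t^(k-1-1))) t :=
        (hasDerivAt_pow (k-1) t).const_mul c
      have h2 : HasDerivAt (fun s : ℝ => Real.exp (-(k:ℝ)*s))
          (Real.exp (-(k:ℝ)*t) * (-(k:ℝ))) t := by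
        have h3 : HasDerivAt (fun s : ℝ => -(k:ℝ)*s) (-(k:ℝ)) t := by
          simpa using (hasDerivAt_id t).const_mul (-(k:ℝ))
        exact h3.exp
      exact h1.mul h2
    have hDeq : c * (((k-1:ℕ):ℝ) * t^(k-1-1)) * Real.exp (-(k:ℝ)*t)
          + (c * t^(k-1)) * (Real.exp (-(k:ℝ)*t) * (-(k:ℝ)))
        = (k : ℝ) / 2 * ∑ l ∈ Finset.Ico 1 k, v l t * v (k - l) t - (k : ℝ) * v k t := by
      rw [hv k hk t ht.le]
      rcases eq_or_lt_of_le hk with h1|h1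
      · -- k = 1
        rw [hc, ← h1]
        norm_num
      · -- k ≥ 2
        have hk2 : 2 ≤ k := h1
        have hsum : ∑ l ∈ Finset.Ico 1 k, v l t * v (k - l) t
            = (2*((k:ℝ)-1)*(k:ℝ)^(k-2)) / (k.factorial : ℝ)
              * (t^(k-2) * Real.exp (-(k:ℝ)*t)) := by
          have hterm : ∀ l ∈ Finset.Ico 1 k, v l t * v (k - l) t
              = ((k.choose l : ℝ) * (l:ℝ)^(l-1) * ((k-l : ℕ):ℝ)^(k-l-1)) / (k.factorial : ℝ)
                * (t^(k-2) * Real.exp (-(k:ℝ)*t)) := by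
            intro l hl
            obtain ⟨hl1, hl2⟩ := Finset.mem_Ico.mp hl
            rw [hv l hl1 t ht.le, hv (k-l) (by omega) t ht.le]
            have hposum : t^(l-1) * t^(k-l-1) = t^(k-2) := by
              rw [← pow_add]; congr 1; omega
            have hexpsum : Real.exp (-(l:ℝ)*t) * Real.exp (-((k-l:ℕ):ℝ)*t)
                = Real.exp (-(k:ℝ)*t) := by
              rw [← Real.exp_add]
              congr 1
              rw [Nat.cast_sub (by omega)]
              ring
            have hfac : (k.choose l : ℝ) * (l.factorial : ℝ) * ((k-l).factorial : ℝ)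
                = (k.factorial : ℝ) := by
              exact_mod_cast congrArg (fun x : ℕ => (x:ℝ))
                (Nat.choose_mul_factorial_mul_factorial (le_of_lt hl2))
            have hl0 : (l.factorial : ℝ) ≠ 0 := Nat.cast_ne_zero.mpr (Nat.factorial_ne_zero l)
            have hkl0 : ((k-l).factorial : ℝ) ≠ 0 := Nat.cast_ne_zero.mpr (Nat.factorial_ne_zero _)
            have hk0 : (k.factorial : ℝ) ≠ 0 := Nat.cast_ne_zero.mpr (Nat.factorial_ne_zero k)
            have hch0 : (k.choose l : ℝ) ≠ 0 :=
              Nat.cast_ne_zero.mpr (Nat.choose_pos (le_of_lt hl2)).ne'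
            rw [← hposum, ← hexpsum, ← hfac]
            field_simp
          rw [Finset.sum_congr rfl hterm, ← Finset.sum_mul, ← Finset.sum_div, smolu_Skey k hk2]
        rw [hsum]
        have hpow1 : t^(k-1-1) = t^(k-2) := by congr 1
        have hpow2 : (k:ℝ)^(k-1) = (k:ℝ) * (k:ℝ)^(k-2) := by
          rw [show k-1 = (k-2)+1 by omega, pow_succ]; ring
        have hpow3 : t^(k-1) = t^(k-2) * t := by
          rw [show k-1 = (k-2)+1 by omega, pow_succ]
        have hcast : ((k-1:ℕ):ℝ) = (k:ℝ) - 1 := by rw [Nat.cast_sub (by omega)]; norm_num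
        have hk0 : (k.factorial : ℝ) ≠ 0 := Nat.cast_ne_zero.mpr (Nat.factorial_ne_zero k)
        rw [hc, hpow1, hpow2, hpow3, hcast]
        field_simp
        ring
    rw [← hDeq]
    exact hD.congr_of_eventuallyEq hveq.symm
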